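/- Let Ψ be a nonempty finite index set with |Ψ| = m̃, let β⁽ⁱ⁾ ∈ ℝ^p for each i ∈ Ψ, let β* ∈ ℝ^p, and let ε ≥ 0. Suppose there exists k ∈ Ψ such that ‖β⁽ᵏ⁾ − β*‖₂ ≤ ε and ‖β⁽ᵏ⁾ − β⁽ⁱ⁾‖₂ ≤ 2ε for every i ∈ Ψ. If β̂ ∈ ℝ^p is a robust consolidation of {β⁽ⁱ⁾ : i ∈ Ψ}, i.e. Σ_{i∈Ψ} ‖β⁽ⁱ⁾ − β̂‖₂ ≤ Σ_{i∈Ψ} ‖β⁽ⁱ⁾ − β‖₂ for every β ∈ ℝ^p, then ‖β̂ − β*‖₂ ≤ 5ε. -/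

import Mathlib

/-- Theorem 2 (DRLR recovery property): if some `k ∈ Ψ` is ε-accurate and within
2ε of every estimate in the dominating set `Ψ` (of size mt), then the robust
consolidation `β̂` of `{β⁽ⁱ⁾ : i ∈ Ψ}` satisfies `‖β̂ − β*‖₂ ≤ 5ε`. -/
theorem drlr_recovery {ι : Type*} (Ψ : Finset ι) (mt : ℕ)
    (hcard : Ψ.card = mt) (hne : Ψ.Nonempty)
    {n : ℕ} (β : ι → EuclideanSpace ℝ (Fin n))
    (βstar βhat : EuclideanSpace ℝ (Fin n)) (ε : ℝ) (hε : 0 ≤ ε)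
    (hk : ∃ k ∈ Ψ, ‖β k - βstar‖ ≤ ε ∧ ∀ i ∈ Ψ, ‖β k - β i‖ ≤ 2 * ε)
    (hmin : ∀ b : EuclideanSpace ℝ (Fin n),
      ∑ i ∈ Ψ, ‖β i - βhat‖ ≤ ∑ i ∈ Ψ, ‖β i - b‖) :
    ‖βhat - βstar‖ ≤ 5 * ε := by
  obtain ⟨k, hkΨ, hk1, hk2⟩ := hk
  have hcpos : (0 : ℝ) < Ψ.card := by exact_mod_cast Finset.card_pos.mpr hne
  have hsumk : ∑ i ∈ Ψ, ‖β i - β k‖ ≤ (Ψ.card : ℝ) * (2 * ε) := by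
    calc ∑ i ∈ Ψ, ‖β i - β k‖ ≤ ∑ _i ∈ Ψ, (2 * ε) :=
          Finset.sum_le_sum fun i hi => by rw [norm_sub_rev]; exact hk2 i hi
      _ = (Ψ.card : ℝ) * (2 * ε) := by rw [Finset.sum_const, nsmul_eq_mul]
  have h1 : (Ψ.card : ℝ) * ‖βhat - β k‖ ≤ 2 * ((Ψ.card : ℝ) * (2 * ε)) := by
    calc (Ψ.card : ℝ) * ‖βhat - β k‖ = ∑ _i ∈ Ψ, ‖βhat - β k‖ := by
          rw [Finset.sum_const, nsmul_eq_mul]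
      _ ≤ ∑ i ∈ Ψ, (‖β i - βhat‖ + ‖β i - β k‖) := by
          refine Finset.sum_le_sum fun i hi => ?_
          have h : βhat - β k = -(β i - βhat) + (β i - β k) := by abel
          rw [h]
          exact (norm_add_le _ _).trans_eq (by rw [norm_neg])
      _ = ∑ i ∈ Ψ, ‖β i - βhat‖ + ∑ i ∈ Ψ, ‖β i - β k‖ := Finset.sum_add_distrib
      _ ≤ ∑ i ∈ Ψ, ‖β i - β k‖ + ∑ i ∈ Ψ, ‖β i - β k‖ := by
          exact add_le_add_left (hmin (β k)) _
      _ = 2 * ∑ i ∈ Ψ, ‖β i - β k‖ := by ring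
      _ ≤ 2 * ((Ψ.card : ℝ) * (2 * ε)) := by linarith
  have h2 : ‖βhat - β k‖ ≤ 4 * ε := by
    rw [show (2 : ℝ) * ((Ψ.card : ℝ) * (2 * ε)) = (Ψ.card : ℝ) * (4 * ε) by ring] at h1
    exact le_of_mul_le_mul_left (by linarith) hcpos
  calc ‖βhat - βstar‖ = ‖(βhat - β k) + (β k - βstar)‖ := by rw [sub_add_sub_cancel]
    _ ≤ ‖βhat - β k‖ + ‖β k - βstar‖ := norm_add_le _ _
    _ ≤ 4 * ε + ε := add_le_add h2 hk1
    _ = 5 * ε := by ring
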